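/- Let q ≥ 7 be a power of an odd prime and F = 𝔽_q. In the graph R, the number of vertices at graph distance exactly 3 from the line [0,1,0] is r₃([0,1,0]) = q³ − 4q² + 9q − 8. -/

import Mathlib

/-- Vertices: points (left component) and lines (right component), each a triple over `F`. -/
abbrev Vtx (F : Type) := (F × F × F) ⊕ (F × F × F)

/-- Adjacency for the graph `Γ_F(p₁ℓ₁, g(p₁,p₂,ℓ₁))`: a point `(p₁,p₂,p₃)` and a line
`[ℓ₁,ℓ₂,ℓ₃]` are adjacent iff `p₂+ℓ₂ = p₁ℓ₁` and `p₃+ℓ₃ = g(p₁,p₂,ℓ₁)`. -/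
def gammaAdj (F : Type) [Field F] (g : F → F → F → F) : Vtx F → Vtx F → Prop
  | Sum.inl p, Sum.inr l => p.2.1 + l.2.1 = p.1 * l.1 ∧ p.2.2 + l.2.2 = g p.1 p.2.1 l.1
  | Sum.inr l, Sum.inl p => p.2.1 + l.2.1 = p.1 * l.1 ∧ p.2.2 + l.2.2 = g p.1 p.2.1 l.1
  | _, _ => False

/-- The bipartite graph `Γ_F(p₁ℓ₁, g(p₁,p₂,ℓ₁))`. -/
def Gamma (F : Type) [Field F] (g : F → F → F → F) : SimpleGraph (Vtx F) where
  Adj := gammaAdj F g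
  symm := by
    constructor
    intro v w h
    match v, w with
    | Sum.inl p, Sum.inr l => exact h
    | Sum.inr l, Sum.inl p => exact h
  loopless := by
    constructor
    intro v h
    match v with
    | Sum.inl p => exact h
    | Sum.inr l => exact h

/-- The graph `R = Γ_F(p₁ℓ₁, p₁p₂ℓ₁(p₁+p₂+p₁p₂))`. -/
def RGraph (F : Type) [Field F] : SimpleGraph (Vtx F) :=
  Gamma F (fun p1 p2 l1 => p1 * p2 * l1 * (p1 + p2 + p1 * p2))

section Aux
variable {F : Type} [Field F]

lemma adj_rl (l p : F × F × F) :
    (RGraph F).Adj (Sum.inr l) (Sum.inl p) ↔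
      p.2.1 + l.2.1 = p.1 * l.1 ∧
      p.2.2 + l.2.2 = p.1 * p.2.1 * l.1 * (p.1 + p.2.1 + p.1 * p.2.1) := Iff.rfl

lemma adj_lr (p l : F × F × F) :
    (RGraph F).Adj (Sum.inl p) (Sum.inr l) ↔
      p.2.1 + l.2.1 = p.1 * l.1 ∧
      p.2.2 + l.2.2 = p.1 * p.2.1 * l.1 * (p.1 + p.2.1 + p.1 * p.2.1) := Iff.rfl

lemma not_adj_ll (l l' : F × F × F) : ¬ (RGraph F).Adj (Sum.inr l) (Sum.inr l') := fun h => h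

lemma not_adj_pp (p p' : F × F × F) : ¬ (RGraph F).Adj (Sum.inl p) (Sum.inl p') := fun h => h

lemma walk_parity : ∀ {u v : Vtx F} (w : (RGraph F).Walk u v),
    (Even w.length ↔ (u.isLeft = v.isLeft)) := by
  intro u v w
  induction w with
  | nil => simp
  | @cons u x v h p ih =>
    have hux : u.isLeft = !x.isLeft := by
      cases u <;> cases x <;> first | rfl | exact absurd h (by exact fun hh => hh)
    rw [SimpleGraph.Walk.length_cons, Nat.even_add_one, ih, hux]
    cases x.isLeft <;> cases v.isLeft <;> simp

def AA (p1 p2 : F) : F := p1 * (p2 * (p1 + p2 + p1 * p2) - 1)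

def cond3 (x : F × F × F) : Prop :=
  (AA x.1 x.2.1 ≠ 0 ∧ x.2.2 - x.2.1 - 1 ≠ 0) ∨
  (AA x.1 x.2.1 = 0 ∧ x.2.2 - x.2.1 - 1 = 0 ∧ ¬(x.2.1 = -1 ∧ x.2.2 = 0))

lemma adj_v0_iff (x : F × F × F) :
    (RGraph F).Adj (Sum.inr (0, 1, 0)) (Sum.inl x) ↔ x.2.1 = -1 ∧ x.2.2 = 0 := by
  rw [adj_rl]
  constructor
  · rintro ⟨h1, h2⟩
    exact ⟨by linear_combination h1, by linear_combination h2⟩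
  · rintro ⟨h1, h2⟩
    constructor
    · linear_combination h1
    · linear_combination h2

lemma AA_neg_one (x1 : F) : AA x1 (-1) = 0 := by unfold AA; ring

lemma dist3_set_eq :
    {w : Vtx F | (RGraph F).dist (Sum.inr ((0:F), (1:F), (0:F))) w = 3} =
      Sum.inl '' {x | cond3 x} := by
  ext w
  simp only [Set.mem_setOf_eq, Set.mem_image]
  constructor
  · intro hd
    have hne : (RGraph F).dist (Sum.inr ((0:F),1,0)) w ≠ 0 := by rw [hd]; norm_num
    obtain ⟨W, hW⟩ := SimpleGraph.exists_walk_of_dist_ne_zero hne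
    rw [hd] at hW
    obtain ⟨x, rfl⟩ : ∃ x, w = Sum.inl x := by
      cases w with
      | inl x => exact ⟨x, rfl⟩
      | inr l =>
        have hpar := walk_parity W
        rw [hW] at hpar
        exact absurd (hpar.mpr rfl) (by decide)
    refine ⟨x, ?_, rfl⟩
    cases W with
    | cons h1 W1 =>
      rename_i a
      cases a with
      | inr l => exact absurd h1 (not_adj_ll _ _)
      | inl a =>
        cases W1 with
        | nil => simp at hW
        | cons h2 W2 =>
          rename_i b
          cases b with
          | inl a' => exact absurd h2 (not_adj_pp _ _)
          | inr l =>
            cases W2 with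
            | cons h3 W3 =>
              rename_i c2
              cases W3 with
              | cons h4 W4 => simp at hW
              | nil =>
                clear hW hne
                obtain ⟨a1, a2, a3⟩ := a
                obtain ⟨t, l2, l3⟩ := l
                obtain ⟨x1, x2, x3⟩ := x
                obtain ⟨ha2, ha3⟩ := (adj_v0_iff _).mp h1
                simp only at ha2 ha3
                subst ha2 ha3
                rw [adj_lr] at h2
                rw [adj_rl] at h3
                simp only at h2 h3
                obtain ⟨h2a, h2b⟩ := h2
                obtain ⟨h3a, h3b⟩ := h3
                by_cases ht : t = 0
                · exfalso
                  have hl2 : l2 = 1 := by rw [ht] at h2a; linear_combination h2a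
                  have hl3 : l3 = 0 := by rw [ht] at h2b; linear_combination h2b
                  subst ht hl2 hl3
                  have : (RGraph F).dist (Sum.inr ((0:F),1,0)) (Sum.inl (x1,x2,x3)) = 1 :=
                    SimpleGraph.dist_eq_one_iff_adj.mpr ⟨h3a, h3b⟩
                  rw [hd] at this; exact absurd this (by norm_num)
                · have key : x3 - x2 - 1 = t * AA x1 x2 := by
                    unfold AA
                    linear_combination h3b - h3a - h2b + h2a
                  by_cases hA : AA x1 x2 = 0
                  · refine Or.inr ⟨hA, by rw [key, hA]; ring, ?_⟩
                    rintro ⟨hx2, hx3⟩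
                    have : (RGraph F).dist (Sum.inr ((0:F),1,0)) (Sum.inl (x1,x2,x3)) = 1 :=
                      SimpleGraph.dist_eq_one_iff_adj.mpr ((adj_v0_iff _).mpr ⟨hx2, hx3⟩)
                    rw [hd] at this; exact absurd this (by norm_num)
                  · exact Or.inl ⟨hA, by rw [key]; exact mul_ne_zero ht hA⟩
  · rintro ⟨⟨x1, x2, x3⟩, hx, rfl⟩
    obtain ⟨t, ht0, htc⟩ : ∃ t : F, t ≠ 0 ∧ x3 - x2 - 1 = t * AA x1 x2 := by
      rcases hx with ⟨hA, hc⟩ | ⟨hA, hc, -⟩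
      · exact ⟨(x3 - x2 - 1) * (AA x1 x2)⁻¹, mul_ne_zero hc (inv_ne_zero hA), by
          field_simp⟩
      · exact ⟨1, one_ne_zero, by rw [hA, hc]; ring⟩
    set a1 : F := (x1 * t - x2 - 1) * t⁻¹ with ha1
    have hat : a1 * t = x1 * t - x2 - 1 := by rw [ha1]; field_simp
    have h1 : (RGraph F).Adj (Sum.inr ((0:F),1,0)) (Sum.inl (a1, -1, 0)) :=
      (adj_v0_iff _).mpr ⟨rfl, rfl⟩
    have h2 : (RGraph F).Adj (Sum.inl (a1, -1, 0)) (Sum.inr (t, a1*t + 1, a1*t)) := by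
      rw [adj_lr]
      exact ⟨by ring, by ring⟩
    have h3 : (RGraph F).Adj (Sum.inr (t, a1*t + 1, a1*t)) (Sum.inl (x1, x2, x3)) := by
      rw [adj_rl]
      constructor
      · simp only
        rw [hat]; ring
      · simp only
        rw [hat]
        unfold AA at htc
        linear_combination htc
    have W : (RGraph F).Walk (Sum.inr ((0:F),1,0)) (Sum.inl (x1,x2,x3)) :=
      SimpleGraph.Walk.cons h1 (SimpleGraph.Walk.cons h2
        (SimpleGraph.Walk.cons h3 SimpleGraph.Walk.nil))
    have hle : (RGraph F).dist (Sum.inr ((0:F),1,0)) (Sum.inl (x1,x2,x3)) ≤ 3 := by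
      have h := SimpleGraph.dist_le (SimpleGraph.Walk.cons h1 (SimpleGraph.Walk.cons h2
        (SimpleGraph.Walk.cons h3 SimpleGraph.Walk.nil)))
      simpa using h
    have hne0 : (RGraph F).dist (Sum.inr ((0:F),1,0)) (Sum.inl (x1,x2,x3)) ≠ 0 := by
      rw [SimpleGraph.dist_ne_zero_iff_ne_and_reachable]
      exact ⟨by simp, ⟨W⟩⟩
    obtain ⟨W', hW'⟩ := SimpleGraph.exists_walk_of_dist_ne_zero hne0
    have hoddd : ¬ Even ((RGraph F).dist (Sum.inr ((0:F),1,0)) (Sum.inl (x1,x2,x3))) := by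
      rw [← hW', walk_parity W']
      simp
    have hne1 : (RGraph F).dist (Sum.inr ((0:F),1,0)) (Sum.inl (x1,x2,x3)) ≠ 1 := by
      intro h
      have hadj := SimpleGraph.dist_eq_one_iff_adj.mp h
      obtain ⟨hx2, hx3⟩ := (adj_v0_iff _).mp hadj
      simp only at hx2 hx3
      rcases hx with ⟨hA, hc⟩ | ⟨-, -, hni⟩
      · rw [hx2] at hA
        exact hA (AA_neg_one x1)
      · exact hni ⟨hx2, hx3⟩
    rw [Nat.not_even_iff] at hoddd
    omega

end Aux

section Count2
variable {F : Type} [Field F]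


variable [Fintype F] [DecidableEq F] [DecidablePred (cond3 (F := F))]

lemma count_cond3 (h2 : (2:F) ≠ 0) :
    ((Finset.univ.filter (fun x : F × F × F => cond3 x)).card : ℤ) =
      (Fintype.card F : ℤ)^3 - 4*(Fintype.card F : ℤ)^2 + 9*(Fintype.card F : ℤ) - 8 := by
  classical
  set Q : ℕ := Fintype.card F with hQ
  have hQ1 : 1 ≤ Q := Fintype.card_pos
  have hone_ne : (1:F) ≠ -1 := fun h => h2 (by linear_combination h)
  have hzero_ne : (0:F) ≠ -1 := fun h => one_ne_zero (α := F) (by linear_combination h)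
  set C : ℤ := (Q:ℤ) - 1 with hC
  set D : ℤ := (Q:ℤ)^2 - 3*(Q:ℤ) + 4 with hD
  set E : ℤ := (Q:ℤ)^2 - 2*(Q:ℤ) + 2 with hE
  -- fiberwise over (p1, p2)
  rw [Finset.card_eq_sum_card_fiberwise
    (f := fun x : F × F × F => (x.1, x.2.1)) (t := Finset.univ) (fun x _ => Finset.mem_univ _)]
  -- each fiber is in bijection with a filter over the third coordinate
  have hinner : ∀ b : F × F,
      ((Finset.univ.filter (fun x : F × F × F => cond3 x)).filter
          (fun x => (x.1, x.2.1) = b)).card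
        = (Finset.univ.filter (fun z : F => cond3 (b.1, b.2, z))).card := by
    intro b
    refine Finset.card_bij' (fun x _ => x.2.2) (fun z _ => (b.1, b.2, z)) ?_ ?_ ?_ ?_
    · intro x hx
      simp only [Finset.mem_filter, Finset.mem_univ, true_and] at hx ⊢
      obtain ⟨hc, hb⟩ := hx
      obtain ⟨x1, x2, x3⟩ := x
      simp only [Prod.mk.injEq] at hb
      obtain ⟨rfl, rfl⟩ := hb
      exact hc
    · intro z hz
      simp only [Finset.mem_filter, Finset.mem_univ, true_and] at hz ⊢
      exact ⟨hz, by simp⟩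
    · intro x hx
      simp only [Finset.mem_filter, Finset.mem_univ, true_and] at hx
      obtain ⟨x1, x2, x3⟩ := x
      simp only [Prod.mk.injEq] at hx
      obtain ⟨-, rfl, rfl⟩ := hx
      rfl
    · intro z hz
      rfl
  -- evaluate the one-variable counts
  have hcountZ : ∀ b : F × F,
      (((Finset.univ.filter (fun z : F => cond3 (b.1, b.2, z))).card : ℤ))
        = if AA b.1 b.2 = 0 then (if b.2 = -1 then 0 else 1) else C := by
    intro b
    by_cases hA : AA b.1 b.2 = 0
    · by_cases hb2 : b.2 = -1
      · rw [if_pos hA, if_pos hb2]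
        norm_cast
        rw [Finset.card_eq_zero]
        apply Finset.filter_false_of_mem
        intro z _
        unfold cond3
        rintro (⟨hne, -⟩ | ⟨-, hz, hni⟩)
        · exact hne hA
        · exact hni ⟨hb2, by linear_combination hz + hb2⟩
      · rw [if_pos hA, if_neg hb2]
        norm_cast
        have heq : (Finset.univ.filter (fun z : F => cond3 (b.1, b.2, z)))
            = {b.2 + 1} := by
          ext z
          simp only [Finset.mem_filter, Finset.mem_univ, true_and, Finset.mem_singleton]
          unfold cond3
          constructor
          · rintro (⟨hne, -⟩ | ⟨-, hz, -⟩)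
            · exact absurd hA hne
            · linear_combination hz
          · intro hz
            exact Or.inr ⟨hA, by rw [hz]; ring, fun hc => hb2 hc.1⟩
        rw [heq, Finset.card_singleton]
    · rw [if_neg hA]
      have heq : (Finset.univ.filter (fun z : F => cond3 (b.1, b.2, z)))
          = Finset.univ.erase (b.2 + 1) := by
        ext z
        simp only [Finset.mem_filter, Finset.mem_univ, true_and, Finset.mem_erase,
          and_true]
        unfold cond3
        constructor
        · rintro (⟨-, hz⟩ | ⟨hAz, -, -⟩)
          · intro hc; exact hz (by rw [hc]; ring)
          · exact absurd hAz hA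
        · intro hz
          exact Or.inl ⟨hA, fun hc => hz (by linear_combination hc)⟩
      rw [heq, Finset.card_erase_of_mem (Finset.mem_univ _), Finset.card_univ, ← hQ]
      rw [hC]
      push_cast [Nat.cast_sub hQ1]
      ring
  -- reduce to a double sum of if-then-else values
  have step1 : (↑(∑ b ∈ (Finset.univ : Finset (F × F)),
        ((Finset.univ.filter (fun x : F × F × F => cond3 x)).filter
          (fun x => (x.1, x.2.1) = b)).card) : ℤ)
      = ∑ p2 : F, ∑ p1 : F,
          (if AA p1 p2 = 0 then (if p2 = -1 then (0:ℤ) else 1) else C) := by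
    push_cast
    rw [show (∑ b : F × F, ((((Finset.univ.filter (fun x : F × F × F => cond3 x)).filter
          (fun x => (x.1, x.2.1) = b)).card : ℤ)))
        = ∑ b : F × F, (if AA b.1 b.2 = 0 then (if b.2 = -1 then (0:ℤ) else 1) else C)
      from Finset.sum_congr rfl (fun b _ => by rw [hinner b]; exact hcountZ b)]
    rw [Fintype.sum_prod_type]
    rw [Finset.sum_comm]
  rw [step1]
  -- the generic inner sums over p1
  have hsum_one :
      (∑ p1 : F, (if p1 = 0 then (1:ℤ) else C)) = E := by
    have hterm : ∀ p1 : F, (if p1 = 0 then (1:ℤ) else C)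
        = C + (if p1 = (0:F) then (1:ℤ) - C else 0) := by
      intro p1; by_cases h0 : p1 = 0 <;> simp [h0]
    rw [Finset.sum_congr rfl (fun p1 _ => hterm p1), Finset.sum_add_distrib,
      Finset.sum_const, Finset.card_univ,
      Finset.sum_ite_eq' Finset.univ (0:F) (fun _ => (1:ℤ) - C)]
    simp only [Finset.mem_univ, if_pos, ← hQ]
    rw [hC, hE]
    ring
  have hsum_two : ∀ (r : F), r ≠ 0 →
      (∑ p1 : F, (if p1 = 0 ∨ p1 = r then (1:ℤ) else C)) = D := by
    intro r hr
    have hterm : ∀ p1 : F, (if p1 = 0 ∨ p1 = r then (1:ℤ) else C)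
        = C + ((if p1 = (0:F) then (1:ℤ) - C else 0) + (if p1 = r then (1:ℤ) - C else 0)) := by
      intro p1
      by_cases h0 : p1 = 0
      · subst h0
        rw [if_pos (Or.inl rfl), if_pos rfl, if_neg (fun hc => hr hc.symm)]
        ring
      · by_cases hrr : p1 = r
        · subst hrr
          rw [if_pos (Or.inr rfl), if_neg h0, if_pos rfl]
          ring
        · rw [if_neg (by tauto), if_neg h0, if_neg hrr]
          ring
    rw [Finset.sum_congr rfl (fun p1 _ => hterm p1), Finset.sum_add_distrib,
      Finset.sum_add_distrib, Finset.sum_const, Finset.card_univ,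
      Finset.sum_ite_eq' Finset.univ (0:F) (fun _ => (1:ℤ) - C),
      Finset.sum_ite_eq' Finset.univ r (fun _ => (1:ℤ) - C)]
    simp only [Finset.mem_univ, if_pos, ← hQ]
    rw [hC, hD]
    ring
  -- evaluate the inner sum for each p2
  have hv : ∀ p2 : F, (∑ p1 : F,
      (if AA p1 p2 = 0 then (if p2 = -1 then (0:ℤ) else 1) else C))
      = D + ((if p2 = (-1:F) then -D else 0) + ((if p2 = (0:F) then E - D else 0)
          + (if p2 = (1:F) then E - D else 0))) := by
    intro p2
    by_cases hm1 : p2 = -1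
    · subst hm1
      have hls : (∑ p1 : F, (if AA p1 (-1) = 0 then (if (-1:F) = -1 then (0:ℤ) else 1) else C))
          = 0 := Finset.sum_eq_zero (fun p1 _ => by rw [if_pos (AA_neg_one p1), if_pos rfl])
      rw [hls, if_pos rfl, if_neg (fun h => hzero_ne h.symm), if_neg (fun h => hone_ne h.symm)]
      ring
    · by_cases h0 : p2 = 0
      · subst h0
        have hterm : ∀ p1 : F,
            (if AA p1 (0:F) = 0 then (if (0:F) = -1 then (0:ℤ) else 1) else C)
            = (if p1 = 0 then (1:ℤ) else C) := by
          intro p1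
          by_cases hp : p1 = 0
          · rw [if_pos (by rw [hp]; unfold AA; ring), if_neg hzero_ne, if_pos hp]
          · have hAA0 : AA p1 0 = -p1 := by unfold AA; ring
            rw [if_neg (fun hc => hp (by rw [hAA0] at hc; exact neg_eq_zero.mp hc)), if_neg hp]
        rw [Finset.sum_congr rfl (fun p1 _ => hterm p1), hsum_one,
          if_neg hm1, if_pos rfl, if_neg zero_ne_one]
        ring
      · by_cases h1 : p2 = 1
        · subst h1
          have hterm : ∀ p1 : F,
              (if AA p1 (1:F) = 0 then (if (1:F) = -1 then (0:ℤ) else 1) else C)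
              = (if p1 = 0 then (1:ℤ) else C) := by
            intro p1
            have hAA : AA p1 1 = 2 * p1^2 := by unfold AA; ring
            by_cases hp : p1 = 0
            · rw [if_pos (by rw [hp]; unfold AA; ring), if_neg hone_ne, if_pos hp]
            · rw [if_neg (fun hc => hp (by
                have h2p : 2 * p1^2 = 0 := by rw [← hAA]; exact hc
                rcases mul_eq_zero.mp h2p with h | h
                · exact absurd h h2
                · exact (pow_eq_zero_iff (by norm_num : (2:ℕ) ≠ 0)).mp h)), if_neg hp]
          rw [Finset.sum_congr rfl (fun p1 _ => hterm p1), hsum_one,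
            if_neg hm1, if_neg one_ne_zero, if_pos rfl]
          ring
        · -- generic p2 : the two roots p1 = 0 and p1 = r
          have hp21 : (1:F) + p2 ≠ 0 := fun h => hm1 (by linear_combination h)
          set r : F := (1 - p2) / p2 with hr
          have hrne : r ≠ 0 := by
            rw [hr, div_ne_zero_iff]
            exact ⟨fun h => h1 (by linear_combination -h), h0⟩
          have hiff : ∀ p1 : F, AA p1 p2 = 0 ↔ (p1 = 0 ∨ p1 = r) := by
            intro p1
            unfold AA
            rw [mul_eq_zero]
            constructor
            · rintro (hc | hc)
              · exact Or.inl hc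
              · refine Or.inr ?_
                rw [hr, eq_div_iff h0]
                have hk := mul_left_cancel₀ hp21 (b := p1 * p2) (c := 1 - p2)
                  (by linear_combination hc)
                linear_combination hk
            · rintro (hc | hc)
              · exact Or.inl hc
              · refine Or.inr ?_
                have hc2 : p1 * p2 = 1 - p2 := by
                  rw [hc, hr]
                  field_simp
                linear_combination (1 + p2) * hc2
          have hterm : ∀ p1 : F,
              (if AA p1 p2 = 0 then (if p2 = -1 then (0:ℤ) else 1) else C)
              = (if p1 = 0 ∨ p1 = r then (1:ℤ) else C) := by
            intro p1
            rw [if_neg hm1]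
            by_cases h : AA p1 p2 = 0
            · rw [if_pos h, if_pos ((hiff p1).mp h)]
            · rw [if_neg h, if_neg (fun hc => h ((hiff p1).mpr hc))]
          rw [Finset.sum_congr rfl (fun p1 _ => hterm p1), hsum_two r hrne,
            if_neg hm1, if_neg h0, if_neg h1]
          ring
  rw [Finset.sum_congr rfl (fun p2 _ => hv p2)]
  clear_value D E
  rw [Finset.sum_add_distrib, Finset.sum_add_distrib, Finset.sum_add_distrib,
    Finset.sum_const, Finset.card_univ,
    Finset.sum_ite_eq' Finset.univ (-1:F) (fun _ => -D),
    Finset.sum_ite_eq' Finset.univ (0:F) (fun _ => E - D),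
    Finset.sum_ite_eq' Finset.univ (1:F) (fun _ => E - D),
    if_pos (Finset.mem_univ (-1:F)), if_pos (Finset.mem_univ (0:F)),
    if_pos (Finset.mem_univ (1:F)), ← hQ, nsmul_eq_mul, hD, hE]
  push_cast
  ring


end Count2

/-- Let `q ≥ 7` be a power of an odd prime and `F = 𝔽_q`. In the graph `R`, the number of
vertices at graph distance exactly 3 from the line `[0,1,0]` is `q³ − 4q² + 9q − 8`. -/
theorem r3_line_010 (q p e : ℕ) (hp : p.Prime) (hodd : Odd p) (he : 1 ≤ e) (hq : q = p ^ e)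
    (h7 : 7 ≤ q) (F : Type) [Field F] [Fintype F] (hcard : Fintype.card F = q) :
    (Set.ncard {w : Vtx F | (RGraph F).dist (Sum.inr (0, 1, 0)) w = 3} : ℤ) =
      (q : ℤ) ^ 3 - 4 * (q : ℤ) ^ 2 + 9 * (q : ℤ) - 8 := by
  classical
  have hpF : (p : F) = 0 := by
    have hc0 : ((Fintype.card F : ℕ) : F) = 0 := FiniteField.cast_card_eq_zero F
    rw [hcard, hq] at hc0
    push_cast at hc0
    exact (pow_eq_zero_iff (by omega : e ≠ 0)).mp hc0
  have h2 : (2:F) ≠ 0 := by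
    intro h20
    have hpd : ¬ (p ∣ 2) := by
      intro hd
      have hp2 := (Nat.prime_dvd_prime_iff_eq hp Nat.prime_two).mp hd
      rw [hp2] at hodd
      exact (by decide : ¬ Odd 2) hodd
    have hco : Nat.Coprime p 2 := (Nat.Prime.coprime_iff_not_dvd hp).mpr hpd
    have hbez := Nat.gcd_eq_gcd_ab p 2
    rw [Nat.Coprime.gcd_eq_one hco] at hbez
    have h1F : (1 : F) = 0 := by
      have hcast := congrArg (fun z : ℤ => (z : F)) hbez
      push_cast at hcast
      rw [hpF, h20] at hcast
      simpa using hcast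
    exact one_ne_zero h1F
  rw [dist3_set_eq, Set.ncard_image_of_injective _ Sum.inl_injective]
  have hn : {x : F × F × F | cond3 x}.ncard
      = (Finset.univ.filter (fun x : F × F × F => cond3 x)).card := by
    rw [Set.ncard_eq_toFinset_card']
    congr 1
    ext x
    simp [Set.mem_toFinset]
  rw [hn, count_cond3 h2, hcard]
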